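/- For every integer n ≥ 1, the equation ∑_{k=0}^{n-1} (-1)^{n-k-1} (n!/k!) φ^k e^φ = e^{nt} + (-1)^{n-1} n! , viewed as defining φ implicitly as a function of t, has for each real t a unique solution φ(t) > 0, i.e. the function F(φ) = ∑_{k=0}^{n-1} (-1)^{n-k-1} (n!/k!) φ^k e^φ is strictly increasing on (0,∞) and maps (0,∞) bijectively onto ((-1)^{n-1} n!, ∞). -/

import Mathlib

open Finset Real

lemma stmt0_hasDeriv (n : ℕ) (hn : 1 ≤ n) (x : ℝ) :
    HasDerivAt (fun y : ℝ => ∑ k ∈ Finset.range n,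
        (-1 : ℝ) ^ (n - k - 1) * ((n.factorial : ℝ) / (k.factorial : ℝ)) * y ^ k * Real.exp y)
      ((n : ℝ) * x ^ (n - 1) * Real.exp x) x := by
  induction n with
  | zero => omega
  | succ m ih =>
    rcases Nat.eq_zero_or_pos m with hm | hm
    · subst hm
      have heq : (fun y : ℝ => ∑ k ∈ Finset.range (0 + 1),
          (-1 : ℝ) ^ (0 + 1 - k - 1) * (((0 + 1).factorial : ℝ) / (k.factorial : ℝ)) * y ^ k *
            Real.exp y) = Real.exp := by
        funext y; simp
      rw [heq]
      simpa using Real.hasDerivAt_exp x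
    · have key : ∀ y : ℝ, (∑ k ∈ Finset.range (m + 1),
          (-1 : ℝ) ^ (m + 1 - k - 1) * (((m + 1).factorial : ℝ) / (k.factorial : ℝ)) * y ^ k *
            Real.exp y) =
          -((m : ℝ) + 1) * (∑ k ∈ Finset.range m,
            (-1 : ℝ) ^ (m - k - 1) * ((m.factorial : ℝ) / (k.factorial : ℝ)) * y ^ k *
              Real.exp y) + ((m : ℝ) + 1) * (y ^ m * Real.exp y) := by
        intro y
        rw [Finset.sum_range_succ, Finset.mul_sum]
        congr 1
        · apply Finset.sum_congr rfl
          intro k hk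
          rw [Finset.mem_range] at hk
          have h1 : m + 1 - k - 1 = (m - k - 1) + 1 := by omega
          have h2 : ((m + 1).factorial : ℝ) = ((m : ℝ) + 1) * (m.factorial : ℝ) := by
            rw [Nat.factorial_succ]; push_cast; ring
          rw [h1, h2, pow_succ]
          ring
        · have h3 : m + 1 - m - 1 = 0 := by omega
          have h2 : ((m + 1).factorial : ℝ) = ((m : ℝ) + 1) * (m.factorial : ℝ) := by
            rw [Nat.factorial_succ]; push_cast; ring
          rw [h3, h2]
          have hmf : (m.factorial : ℝ) ≠ 0 := by positivity
          field_simp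
      have hpow := hasDerivAt_pow m x
      have hexp := Real.hasDerivAt_exp x
      have h1 := ((ih hm).const_mul (-((m : ℝ) + 1))).add ((hpow.mul hexp).const_mul ((m : ℝ) + 1))
      have heq : (fun y : ℝ => ∑ k ∈ Finset.range (m + 1),
          (-1 : ℝ) ^ (m + 1 - k - 1) * (((m + 1).factorial : ℝ) / (k.factorial : ℝ)) * y ^ k *
            Real.exp y) =
          fun y : ℝ => -((m : ℝ) + 1) * (∑ k ∈ Finset.range m,
            (-1 : ℝ) ^ (m - k - 1) * ((m.factorial : ℝ) / (k.factorial : ℝ)) * y ^ k *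
              Real.exp y) + ((m : ℝ) + 1) * (y ^ m * Real.exp y) := funext key
      rw [heq]
      convert h1 using 1
      case e'_4 => rfl
      case e'_5 => rfl
      case e'_8 => rfl
      have hm1 : m - 1 + 1 = m := by omega
      have hx : x ^ m = x ^ (m - 1) * x := by rw [← pow_succ, hm1]
      have hsimp : (m + 1 : ℕ) - 1 = m := by omega
      rw [hsimp]
      push_cast
      rw [hx]
      ring

/-- For every integer `n ≥ 1`, the function
`F φ = ∑_{k=0}^{n-1} (-1)^{n-k-1} (n!/k!) φ^k e^φ` is strictly increasing on `(0,∞)`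
and maps `(0,∞)` bijectively onto `((-1)^{n-1} n!, ∞)`. -/
theorem stmt_0 (n : ℕ) (hn : 1 ≤ n) (F : ℝ → ℝ)
    (hF : ∀ x : ℝ, F x =
      ∑ k ∈ Finset.range n,
        (-1 : ℝ) ^ (n - k - 1) * ((n.factorial : ℝ) / (k.factorial : ℝ)) * x ^ k * Real.exp x) :
    StrictMonoOn F (Set.Ioi (0 : ℝ)) ∧
      Set.BijOn F (Set.Ioi (0 : ℝ)) (Set.Ioi ((-1 : ℝ) ^ (n - 1) * (n.factorial : ℝ))) := by
  have hFfun : F = fun x : ℝ => ∑ k ∈ Finset.range n,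
      (-1 : ℝ) ^ (n - k - 1) * ((n.factorial : ℝ) / (k.factorial : ℝ)) * x ^ k * Real.exp x :=
    funext hF
  have hderiv : ∀ x : ℝ, HasDerivAt F ((n : ℝ) * x ^ (n - 1) * Real.exp x) x := by
    intro x; rw [hFfun]; exact stmt0_hasDeriv n hn x
  have hdiff : Differentiable ℝ F := fun x => (hderiv x).differentiableAt
  have hderiv' : ∀ x : ℝ, deriv F x = (n : ℝ) * x ^ (n - 1) * Real.exp x := fun x =>
    (hderiv x).deriv
  have hcont : Continuous F := hdiff.continuous
  -- F 0
  have hF0 : F 0 = (-1 : ℝ) ^ (n - 1) * (n.factorial : ℝ) := by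
    rw [hF 0]
    rw [Finset.sum_eq_single_of_mem 0 (Finset.mem_range.mpr (by omega))]
    · simp
    · intro k _ hk
      simp [zero_pow hk]
  -- strict mono on Ici 0
  have hmonoIci : StrictMonoOn F (Set.Ici (0 : ℝ)) := by
    apply strictMonoOn_of_deriv_pos (convex_Ici 0) hcont.continuousOn
    intro x hx
    rw [interior_Ici, Set.mem_Ioi] at hx
    rw [hderiv']
    have : (0 : ℝ) < (n : ℝ) := by exact_mod_cast hn
    positivity
  have hmono : StrictMonoOn F (Set.Ioi (0 : ℝ)) := hmonoIci.mono Set.Ioi_subset_Ici_self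
  refine ⟨hmono, ?_, hmono.injOn, ?_⟩
  · -- MapsTo
    intro x hx
    rw [Set.mem_Ioi] at hx ⊢
    rw [← hF0]
    exact hmonoIci Set.self_mem_Ici (le_of_lt hx) hx
  · -- SurjOn
    intro y hy
    rw [Set.mem_Ioi, ← hF0] at hy
    -- growth: for z ≥ 1, F 1 + (z - 1) ≤ F z
    have hgrow : ∀ z : ℝ, 1 ≤ z → 1 * (z - 1) ≤ F z - F 1 := by
      intro z hz
      apply (convex_Ici (1 : ℝ)).mul_sub_le_image_sub_of_le_deriv hcont.continuousOn
        hdiff.differentiableOn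
      · intro t ht
        rw [interior_Ici, Set.mem_Ioi] at ht
        rw [hderiv']
        have h1 : (1 : ℝ) ≤ (n : ℝ) := by exact_mod_cast hn
        have h2 : (1 : ℝ) ≤ t ^ (n - 1) := one_le_pow₀ (le_of_lt ht)
        have h3 : (1 : ℝ) ≤ Real.exp t := by
          rw [← Real.exp_zero]
          exact Real.exp_le_exp.mpr (by linarith)
        have h4 : (1 : ℝ) ≤ (n : ℝ) * t ^ (n - 1) := by nlinarith
        nlinarith
      · exact Set.self_mem_Ici
      · exact hz
      · exact hz
    set b : ℝ := max 1 (y - F 1 + 2) with hb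
    have hb1 : (1 : ℝ) ≤ b := le_max_left _ _
    have hb2 : y - F 1 + 2 ≤ b := le_max_right _ _
    have hFb : y < F b := by
      have := hgrow b hb1
      linarith
    have hyIoo : y ∈ Set.Ioo (F 0) (F b) := ⟨hy, hFb⟩
    have hIVT := intermediate_value_Ioo (a := (0 : ℝ)) (b := b) (by linarith)
      hcont.continuousOn
    obtain ⟨x, hx, hfx⟩ := hIVT hyIoo
    exact ⟨x, hx.1, hfx⟩
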